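/- Let D be a DTMC in which every non-firing state deterministically (with probability 1) transitions to its unique successor, and let D′ be its reduction obtained by collapsing maximal chains of deterministic transitions. Then for any target set of firing states, the probability (from the initial state) of eventually reaching the target set is equal in D and D′. -/

import Mathlib

open scoped ENNReal NNReal

variable {Q : Type}

/-- The measure of the finite path `f 0, f 1, …, f n`: the product of the
transition probabilities of its consecutive steps. -/
def pathMeas (P : Q → Q → ℝ) (f : ℕ → Q) (n : ℕ) : ℝ :=
  ∏ i ∈ Finset.range n, P (f i) (f (i + 1))

/-- A canonical encoding of a finite path from `ι` that hits the target set
`synch` for the first time at step `n = p.1`: the path is constant after `n`. -/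
def FirstHit (ι : Q) (synch : Set Q) (p : ℕ × (ℕ → Q)) : Prop :=
  p.2 0 = ι ∧ p.2 p.1 ∈ synch ∧ (∀ m < p.1, p.2 m ∉ synch) ∧
    ∀ m, p.1 ≤ m → p.2 m = p.2 p.1

/-- The probability, starting from `ι`, of eventually reaching `synch`: the sum
of the measures of all first-hitting finite paths. -/
noncomputable def reachProb (P : Q → Q → ℝ) (ι : Q) (synch : Set Q) : ℝ :=
  ∑' p : { p : ℕ × (ℕ → Q) // FirstHit ι synch p }, pathMeas P p.1.2 p.1.1

/-- The reward accumulated along the finite path `f 0, …, f n` (excluding the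
state reward of the final state). -/
def pathRew (rs : Q → ℝ) (rt : Q → Q → ℝ) (f : ℕ → Q) (n : ℕ) : ℝ :=
  ∑ i ∈ Finset.range n, (rs (f i) + rt (f i) (f (i + 1)))

/-- The expected reward accumulated until first reaching `synch` from `ι`:
the path-measure-weighted sum of accumulated rewards over all first-hitting
paths when `synch` is reached almost surely, and `∞` otherwise. -/
noncomputable def expReward (P : Q → Q → ℝ) (rs : Q → ℝ) (rt : Q → Q → ℝ)
    (ι : Q) (synch : Set Q) : EReal :=
  if reachProb P ι synch = 1 then
    ((∑' p : { p : ℕ × (ℕ → Q) // FirstHit ι synch p },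
        pathMeas P p.1.2 p.1.1 * pathRew rs rt p.1.2 p.1.1 : ℝ) : EReal)
  else ⊤

/-- ENNReal version of the path measure. -/
noncomputable def pathMeasE (P : Q → Q → ℝ) (f : ℕ → Q) (n : ℕ) : ℝ≥0∞ :=
  ∏ i ∈ Finset.range n, ENNReal.ofReal (P (f i) (f (i + 1)))

/-- The (by a cutoff `n : ℕ∞` on the length) truncated hitting sum, in ENNReal. -/
noncomputable def FF (P : Q → Q → ℝ) (S : Set Q) (n : ℕ∞) (s : Q) : ℝ≥0∞ :=
  ∑' p : { p : ℕ × (ℕ → Q) // FirstHit s S p },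
    if (p.1.1 : ℕ∞) ≤ n then pathMeasE P p.1.2 p.1.1 else 0

lemma pathMeasE_eq {P : Q → Q → ℝ} (h : ∀ a b, 0 ≤ P a b) (f : ℕ → Q) (n : ℕ) :
    pathMeasE P f n = ENNReal.ofReal (pathMeas P f n) := by
  induction n with
  | zero => simp [pathMeasE, pathMeas]
  | succ n ih =>
    have hnn : 0 ≤ ∏ i ∈ Finset.range n, P (f i) (f (i + 1)) :=
      Finset.prod_nonneg fun i _ => h _ _
    rw [pathMeasE, pathMeas, Finset.prod_range_succ, Finset.prod_range_succ,
      ENNReal.ofReal_mul hnn]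
    exact congrArg (· * ENNReal.ofReal (P (f n) (f (n + 1)))) ih

lemma reachProb_eq_toReal {P : Q → Q → ℝ} (h : ∀ a b, 0 ≤ P a b) (ι : Q) (S : Set Q) :
    reachProb P ι S = (FF P S ⊤ ι).toReal := by
  have hFF : FF P S ⊤ ι = ∑' p : {p : ℕ × (ℕ → Q) // FirstHit ι S p},
      ENNReal.ofReal (pathMeas P p.1.2 p.1.1) := by
    simp [FF, pathMeasE_eq h]
  rw [hFF, reachProb]
  set g : {p : ℕ × (ℕ → Q) // FirstHit ι S p} → ℝ := fun p => pathMeas P p.1.2 p.1.1 with hg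
  have hgnn : ∀ p, 0 ≤ g p := fun p => Finset.prod_nonneg fun i _ => h _ _
  by_cases hs : Summable g
  · rw [← ENNReal.ofReal_tsum_of_nonneg hgnn hs, ENNReal.toReal_ofReal (tsum_nonneg hgnn)]
  · rw [tsum_eq_zero_of_not_summable hs]
    have htop : ∑' p, ENNReal.ofReal (g p) = ⊤ := by
      by_contra hne
      have h2 := ENNReal.summable_toReal hne
      have h3 : (fun p => (ENNReal.ofReal (g p)).toReal) = g :=
        funext fun p => ENNReal.toReal_ofReal (hgnn p)
      rw [h3] at h2
      exact hs h2
    show (0:ℝ) = (∑' p, ENNReal.ofReal (g p)).toReal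
    simp [htop]

lemma FF_of_mem {P : Q → Q → ℝ} {S : Set Q} {s : Q} (hs : s ∈ S) (n : ℕ∞) :
    FF P S n s = 1 := by
  have h0 : FirstHit s S ((0 : ℕ), fun _ => s) :=
    ⟨rfl, hs, fun m hm => absurd hm (Nat.not_lt_zero m), fun m _ => rfl⟩
  have huniq : ∀ p : {p : ℕ × (ℕ → Q) // FirstHit s S p},
      p = ⟨((0 : ℕ), fun _ => s), h0⟩ := by
    rintro ⟨⟨k, f⟩, hf0, hmem, hpre, hconst⟩
    have hk : k = 0 := by
      by_contra hk
      exact hpre 0 (Nat.pos_of_ne_zero hk) (hf0 ▸ hs)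
    subst hk
    refine Subtype.ext (Prod.ext rfl (funext fun m => ?_))
    exact (hconst m (Nat.zero_le m)).trans hf0
  rw [FF, tsum_eq_single (⟨((0 : ℕ), fun _ => s), h0⟩ :
      {p : ℕ × (ℕ → Q) // FirstHit s S p}) (fun b hb => (hb (huniq b)).elim)]
  simp [pathMeasE]

lemma FF_zero {P : Q → Q → ℝ} {S : Set Q} {s : Q} (hs : s ∉ S) :
    FF P S 0 s = 0 := by
  rw [FF, ENNReal.tsum_eq_zero]
  intro p
  have hk : p.1.1 ≠ 0 := by
    intro h
    exact hs (p.2.1 ▸ (h ▸ p.2.2.1))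
  rw [if_neg]
  intro hle
  exact hk (by exact_mod_cast le_antisymm (by exact_mod_cast hle) (zero_le))

lemma FF_mono {P : Q → Q → ℝ} {S : Set Q} {s : Q} {n n' : ℕ∞} (h : n ≤ n') :
    FF P S n s ≤ FF P S n' s := by
  refine ENNReal.tsum_le_tsum fun p => ?_
  split_ifs with h1 h2
  · exact le_rfl
  · exact absurd (h1.trans h) h2
  · exact zero_le
  · exact le_rfl

lemma FF_top (P : Q → Q → ℝ) (S : Set Q) (s : Q) :
    FF P S ⊤ s = ⨆ k : ℕ, FF P S k s := by
  refine le_antisymm ?_ (iSup_le fun k => FF_mono le_top)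
  rw [FF]
  simp only [le_top, if_true]
  rw [ENNReal.tsum_eq_iSup_sum]
  refine iSup_le fun A => ?_
  set N : ℕ := A.sup (fun p => p.1.1) with hN
  have h1 : ∑ p ∈ A, pathMeasE P p.1.2 p.1.1
      = ∑ p ∈ A, (if (p.1.1 : ℕ∞) ≤ (N : ℕ∞) then pathMeasE P p.1.2 p.1.1 else 0) := by
    refine Finset.sum_congr rfl fun p hp => ?_
    have hle : p.1.1 ≤ N := Finset.le_sup (f := fun p : { p : ℕ × (ℕ → Q) // FirstHit s S p } => p.1.1) hp
    rw [if_pos (by exact_mod_cast hle)]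
  rw [h1]
  exact le_trans (ENNReal.sum_le_tsum A) (le_iSup (fun k : ℕ => FF P S k s) N)

def consPath (s : Q) (f : ℕ → Q) : ℕ → Q := fun i => Nat.casesOn i s f

lemma FirstHit_cons {s q : Q} {S : Set Q} {p : ℕ × (ℕ → Q)} (hs : s ∉ S)
    (hp : FirstHit q S p) :
    FirstHit s S (p.1 + 1, consPath s p.2) := by
  obtain ⟨h0, hmem, hpre, hconst⟩ := hp
  refine ⟨rfl, hmem, ?_, ?_⟩
  · intro m hm
    match m with
    | 0 => exact hs
    | Nat.succ k => exact hpre k (by omega)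
  · intro m hm
    match m, hm with
    | Nat.succ k, hm => exact hconst k (by omega)

def prep (S : Set Q) (s : Q) (hs : s ∉ S) :
    (Σ q : Q, { p : ℕ × (ℕ → Q) // FirstHit q S p }) →
      { p : ℕ × (ℕ → Q) // FirstHit s S p } :=
  fun x => ⟨(x.2.1.1 + 1, consPath s x.2.1.2), FirstHit_cons hs x.2.2⟩

lemma prep_bijective (S : Set Q) (s : Q) (hs : s ∉ S) :
    Function.Bijective (prep S s hs) := by
  constructor
  · rintro ⟨q, ⟨⟨k, f⟩, hf⟩⟩ ⟨q', ⟨⟨k', f'⟩, hf'⟩⟩ h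
    simp only [prep, Subtype.mk.injEq, Prod.mk.injEq] at h
    obtain ⟨hk, hf2⟩ := h
    have hkk : k = k' := by omega
    have hff : f = f' := funext fun i => congrFun hf2 (i + 1)
    have hqq : q = q' := by rw [← hf.1, ← hf'.1, hff]
    subst hkk; subst hff; subst hqq; rfl
  · rintro ⟨⟨k, f⟩, hf⟩
    obtain ⟨h0, hmem, hpre, hconst⟩ := hf
    have hk : k ≠ 0 := by
      intro h
      exact hs (h0 ▸ (h ▸ hmem))
    obtain ⟨k', rfl⟩ : ∃ k', k = k' + 1 := ⟨k - 1, by omega⟩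
    refine ⟨⟨f 1, ⟨(k', fun i => f (i + 1)), rfl, hmem, ?_, ?_⟩⟩, ?_⟩
    · intro m hm
      exact hpre (m + 1) (by omega)
    · intro m hm
      exact hconst (m + 1) (by omega)
    · refine Subtype.ext (Prod.ext rfl (funext fun i => ?_))
      match i with
      | 0 => exact h0.symm
      | Nat.succ j => rfl

lemma FF_succ [Fintype Q] {P : Q → Q → ℝ} {S : Set Q} {s : Q} (hs : s ∉ S) (n : ℕ∞) :
    FF P S (n + 1) s = ∑ q : Q, ENNReal.ofReal (P s q) * FF P S n q := by
  classical
  have key : FF P S (n + 1) s = ∑' x : Σ q : Q, { p : ℕ × (ℕ → Q) // FirstHit q S p },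
      (if (((prep S s hs x).1.1 : ℕ) : ℕ∞) ≤ n + 1
        then pathMeasE P (prep S s hs x).1.2 (prep S s hs x).1.1 else 0) :=
    ((Equiv.ofBijective _ (prep_bijective S s hs)).tsum_eq _).symm
  rw [key, ENNReal.tsum_sigma', tsum_fintype]
  refine Finset.sum_congr rfl fun q _ => ?_
  have hterm : ∀ b : { p : ℕ × (ℕ → Q) // FirstHit q S p },
      (if (((prep S s hs ⟨q, b⟩).1.1 : ℕ) : ℕ∞) ≤ n + 1
        then pathMeasE P (prep S s hs ⟨q, b⟩).1.2 (prep S s hs ⟨q, b⟩).1.1 else 0)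
      = ENNReal.ofReal (P s q) *
          (if ((b.1.1 : ℕ) : ℕ∞) ≤ n then pathMeasE P b.1.2 b.1.1 else 0) := by
    intro b
    have hcond : (((b.1.1 + 1 : ℕ)) : ℕ∞) ≤ n + 1 ↔ ((b.1.1 : ℕ) : ℕ∞) ≤ n := by
      rw [Nat.cast_add, Nat.cast_one]
      exact ENat.add_le_add_iff_right (by simp)
    have hmeas : pathMeasE P (consPath s b.1.2) (b.1.1 + 1)
        = ENNReal.ofReal (P s q) * pathMeasE P b.1.2 b.1.1 := by
      rw [pathMeasE, Finset.prod_range_succ', mul_comm]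
      show ENNReal.ofReal (P s (b.1.2 0)) *
          (∏ i ∈ Finset.range b.1.1,
            ENNReal.ofReal (P (b.1.2 i) (b.1.2 (i + 1)))) = _
      rw [b.2.1]
      rfl
    show (if (((b.1.1 + 1 : ℕ)) : ℕ∞) ≤ n + 1
        then pathMeasE P (consPath s b.1.2) (b.1.1 + 1) else 0) = _
    rw [if_congr hcond hmeas rfl]
    split_ifs with h
    · rfl
    · rw [mul_zero]
  rw [tsum_congr hterm, ENNReal.tsum_mul_left]
  rfl

theorem reduction_preserves_reachability (Q : Type) [Fintype Q] [DecidableEq Q]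
    (ι : Q) (Fire NF synch : Finset Q)
    (succ sucskip : Q → Q) (klen : Q → ℕ) (P P' : Q → Q → ℝ)
    (hpart : ∀ q : Q, q = ι ∨ q ∈ Fire ∨ q ∈ NF)
    (hιF : ι ∉ Fire) (hιNF : ι ∉ NF) (hdisj : ∀ q ∈ Fire, q ∉ NF)
    (hsynch : synch ⊆ Fire)
    (hPnn : ∀ q q', 0 ≤ P q q') (hProw : ∀ q, ∑ q', P q q' = 1)
    (hnoι : ∀ q, P q ι = 0)
    (hdet : ∀ σ ∈ NF, P σ (succ σ) = 1 ∧ ∀ q, q ≠ succ σ → P σ q = 0)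
    (hskipF : ∀ f ∈ Fire, sucskip f = f ∧ klen f = 0)
    (hskipNF : ∀ σ ∈ NF, succ^[klen σ] σ = sucskip σ ∧ sucskip σ ∈ Fire ∧
      ∀ m < klen σ, succ^[m] σ ∈ NF)
    (hP'ι : ∀ f ∈ Fire,
      P' ι f = P ι f + ∑ σ ∈ NF.filter (fun σ => sucskip σ = f), P ι σ)
    (hP'ff : ∀ f₁ ∈ Fire, ∀ f₂ ∈ Fire,
      P' f₁ f₂ = ∑ q ∈ Finset.univ.filter (fun q => q ≠ ι ∧ sucskip q = f₂), P f₁ q)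
    (hP'z : ∀ q q', q ∈ NF ∨ q' ∈ NF → P' q q' = 0)
    (hP'noι : ∀ q, P' q ι = 0) :
    reachProb P ι ↑synch = reachProb P' ι ↑synch := by
  classical
  set S : Set Q := ↑synch with hS
  -- nonnegativity of P'
  have hss : ∀ q : Q, q ≠ ι → sucskip q ∈ Fire := by
    intro q hq
    rcases hpart q with h | h | h
    · exact absurd h hq
    · rw [(hskipF q h).1]; exact h
    · exact (hskipNF q h).2.1
  have hP'all : ∀ f : Q, (f = ι ∨ f ∈ Fire) → ∀ f₂ ∈ Fire,
      P' f f₂ = ∑ q ∈ Finset.univ.filter (fun q => q ≠ ι ∧ sucskip q = f₂), P f q := by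
    intro f hf f₂ hf₂
    rcases hf with hf | hf
    · rw [hf, hP'ι f₂ hf₂]
      have hset : Finset.univ.filter (fun q => q ≠ ι ∧ sucskip q = f₂)
          = insert f₂ (NF.filter (fun σ => sucskip σ = f₂)) := by
        ext q
        simp only [Finset.mem_filter, Finset.mem_univ, true_and, Finset.mem_insert]
        constructor
        · rintro ⟨hq, hsq⟩
          rcases hpart q with h | h | h
          · exact absurd h hq
          · left; rw [← hsq, (hskipF q h).1]
          · right; exact ⟨h, hsq⟩
        · rintro (hqf | ⟨h, hsq⟩)
          · rw [hqf]
            exact ⟨fun h => hιF (h ▸ hf₂), (hskipF f₂ hf₂).1⟩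
          · exact ⟨fun hh => hιNF (hh ▸ h), hsq⟩
      rw [hset, Finset.sum_insert]
      intro hmem
      exact hdisj f₂ hf₂ (Finset.mem_filter.mp hmem).1
    · exact hP'ff f hf f₂ hf₂
  have hP'nn : ∀ a b, 0 ≤ P' a b := by
    intro a b
    rcases hpart b with hb | hb | hb
    · rw [hb, hP'noι]
    · rcases hpart a with ha | ha | ha
      · rw [ha, hP'ι b hb]
        exact add_nonneg (hPnn _ _) (Finset.sum_nonneg fun i _ => hPnn _ _)
      · rw [hP'ff a ha b hb]
        exact Finset.sum_nonneg fun i _ => hPnn _ _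
      · rw [hP'z a b (Or.inl ha)]
    · rw [hP'z a b (Or.inr hb)]
  -- key exchange identity
  have hK : ∀ (G : Q → ℝ≥0∞) (f : Q), (f = ι ∨ f ∈ Fire) →
      ∑ q : Q, ENNReal.ofReal (P' f q) * G q
        = ∑ q : Q, ENNReal.ofReal (P f q) * G (sucskip q) := by
    intro G f hf
    have hL : ∑ q : Q, ENNReal.ofReal (P' f q) * G q
        = ∑ q ∈ Fire, ENNReal.ofReal (P' f q) * G q := by
      refine (Finset.sum_subset (Finset.subset_univ Fire) ?_).symm
      intro q _ hq
      rcases hpart q with h | h | h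
      · rw [h, hP'noι]; simp
      · exact absurd h hq
      · rw [hP'z f q (Or.inr h)]; simp
    have hR : ∑ q : Q, ENNReal.ofReal (P f q) * G (sucskip q)
        = ∑ q ∈ Finset.univ.filter (· ≠ ι), ENNReal.ofReal (P f q) * G (sucskip q) := by
      refine (Finset.sum_subset (Finset.filter_subset _ _) ?_).symm
      intro q _ hq
      simp only [Finset.mem_filter, Finset.mem_univ, true_and, not_not] at hq
      rw [hq, hnoι]; simp
    rw [hL, hR]
    have hmid : ∀ q ∈ Fire, ENNReal.ofReal (P' f q) * G q
        = ∑ x ∈ (Finset.univ.filter (· ≠ ι)).filter (fun x => sucskip x = q),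
            ENNReal.ofReal (P f x) * G (sucskip x) := by
      intro q hq
      rw [hP'all f hf q hq, ENNReal.ofReal_sum_of_nonneg (fun i _ => hPnn f i),
        Finset.sum_mul, Finset.filter_filter]
      refine Finset.sum_congr rfl fun x hx => ?_
      rw [(Finset.mem_filter.mp hx).2.2]
    rw [Finset.sum_congr rfl hmid]
    refine Finset.sum_fiberwise_of_maps_to ?_ _
    intro x hx
    exact hss x (by simpa using (Finset.mem_filter.mp hx).2)
  -- deterministic-chain facts for FF P
  have hNFstep : ∀ σ ∈ NF, ∀ n : ℕ∞, FF P S (n + 1) σ = FF P S n (succ σ) := by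
    intro σ hσ n
    have hσS : σ ∉ S := by
      intro h
      exact hdisj σ (hsynch (by exact_mod_cast h)) hσ
    rw [FF_succ hσS]
    rw [Finset.sum_eq_single (succ σ)]
    · rw [(hdet σ hσ).1]; simp
    · intro q _ hq
      rw [(hdet σ hσ).2 q hq]; simp
    · intro h
      exact absurd (Finset.mem_univ _) h
  have hchain : ∀ (k : ℕ) (σ : Q) (n : ℕ∞), (∀ m < k, succ^[m] σ ∈ NF) →
      FF P S (n + k) σ = FF P S n (succ^[k] σ) := by
    intro k
    induction k with
    | zero => intro σ n h; simp
    | succ k ih =>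
      intro σ n h
      have h0 : σ ∈ NF := by simpa using h 0 (Nat.succ_pos k)
      have hcast : (n + ((k + 1 : ℕ) : ℕ∞)) = (n + (k : ℕ∞)) + 1 := by
        push_cast; ring
      rw [hcast, hNFstep σ h0 (n + (k : ℕ∞)),
        ih (succ σ) n (fun m hm => by
          simpa [Function.iterate_succ_apply] using h (m + 1) (by omega)),
        ← Function.iterate_succ_apply]
  have heqNF : ∀ σ ∈ NF, FF P S ⊤ σ = FF P S ⊤ (sucskip σ) := by
    intro σ hσ
    obtain ⟨hit, hfire, hmem⟩ := hskipNF σ hσ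
    have := hchain (klen σ) σ ⊤ hmem
    rw [top_add, hit] at this
    exact this
  have hleNF : ∀ σ ∈ NF, ∀ n : ℕ∞, FF P S n σ ≤ FF P S n (sucskip σ) := by
    intro σ hσ n
    obtain ⟨hit, hfire, hmem⟩ := hskipNF σ hσ
    calc FF P S n σ ≤ FF P S (n + klen σ) σ := FF_mono le_self_add
      _ = FF P S n (sucskip σ) := by rw [hchain (klen σ) σ n hmem, hit]
  -- recursion at ⊤
  have htop1 : (⊤ : ℕ∞) + 1 = ⊤ := by simp
  have hrecP : ∀ s : Q, s ∉ S →
      FF P S ⊤ s = ∑ q : Q, ENNReal.ofReal (P s q) * FF P S ⊤ q := by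
    intro s hs
    have := FF_succ (P := P) hs ⊤
    rwa [htop1] at this
  have hrecP' : ∀ s : Q, s ∉ S →
      FF P' S ⊤ s = ∑ q : Q, ENNReal.ofReal (P' s q) * FF P' S ⊤ q := by
    intro s hs
    have := FF_succ (P := P') hs ⊤
    rwa [htop1] at this
  -- inequality (a): F' n ≤ F ⊤ on {ι} ∪ Fire
  have ha : ∀ n : ℕ, ∀ f : Q, (f = ι ∨ f ∈ Fire) →
      FF P' S (n : ℕ∞) f ≤ FF P S ⊤ f := by
    intro n
    induction n with
    | zero =>
      intro f hf
      by_cases hfS : f ∈ S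
      · rw [FF_of_mem hfS]
        calc (1 : ℝ≥0∞) = FF P S 0 f := (FF_of_mem hfS 0).symm
          _ ≤ FF P S ⊤ f := FF_mono le_top
      · rw [show ((0 : ℕ) : ℕ∞) = 0 from rfl, FF_zero hfS]
        exact zero_le
    | succ n ih =>
      intro f hf
      by_cases hfS : f ∈ S
      · rw [FF_of_mem hfS]
        calc (1 : ℝ≥0∞) = FF P S 0 f := (FF_of_mem hfS 0).symm
          _ ≤ FF P S ⊤ f := FF_mono le_top
      · have h1 : FF P' S ((n + 1 : ℕ) : ℕ∞) f
            = ∑ q : Q, ENNReal.ofReal (P' f q) * FF P' S (n : ℕ∞) q := by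
          have hcast : ((n + 1 : ℕ) : ℕ∞) = (n : ℕ∞) + 1 := by push_cast; ring
          rw [hcast, FF_succ hfS]
        rw [h1]
        have h2 : ∑ q : Q, ENNReal.ofReal (P' f q) * FF P' S (n : ℕ∞) q
            ≤ ∑ q : Q, ENNReal.ofReal (P' f q) * FF P S ⊤ q := by
          refine Finset.sum_le_sum fun q _ => ?_
          rcases hpart q with hq | hq | hq
          · rw [hq, hP'noι]; simp
          · exact mul_le_mul_right (ih q (Or.inr hq)) _
          · rw [hP'z f q (Or.inr hq)]; simp
        refine h2.trans ?_
        rw [hK (FF P S ⊤) f hf]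
        have h3 : ∑ q : Q, ENNReal.ofReal (P f q) * FF P S ⊤ (sucskip q)
            = ∑ q : Q, ENNReal.ofReal (P f q) * FF P S ⊤ q := by
          refine Finset.sum_congr rfl fun q _ => ?_
          rcases hpart q with hq | hq | hq
          · rw [hq, hnoι]; simp
          · rw [(hskipF q hq).1]
          · rw [heqNF q hq]
        rw [h3, ← hrecP f hfS]
  -- inequality (b): F n ≤ F' ⊤ on {ι} ∪ Fire
  have hb : ∀ n : ℕ, ∀ f : Q, (f = ι ∨ f ∈ Fire) →
      FF P S (n : ℕ∞) f ≤ FF P' S ⊤ f := by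
    intro n
    induction n with
    | zero =>
      intro f hf
      by_cases hfS : f ∈ S
      · rw [FF_of_mem hfS]
        calc (1 : ℝ≥0∞) = FF P' S 0 f := (FF_of_mem hfS 0).symm
          _ ≤ FF P' S ⊤ f := FF_mono le_top
      · rw [show ((0 : ℕ) : ℕ∞) = 0 from rfl, FF_zero hfS]
        exact zero_le
    | succ n ih =>
      intro f hf
      by_cases hfS : f ∈ S
      · rw [FF_of_mem hfS]
        calc (1 : ℝ≥0∞) = FF P' S 0 f := (FF_of_mem hfS 0).symm
          _ ≤ FF P' S ⊤ f := FF_mono le_top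
      · have h1 : FF P S ((n + 1 : ℕ) : ℕ∞) f
            = ∑ q : Q, ENNReal.ofReal (P f q) * FF P S (n : ℕ∞) q := by
          have hcast : ((n + 1 : ℕ) : ℕ∞) = (n : ℕ∞) + 1 := by push_cast; ring
          rw [hcast, FF_succ hfS]
        rw [h1]
        have h2 : ∑ q : Q, ENNReal.ofReal (P f q) * FF P S (n : ℕ∞) q
            ≤ ∑ q : Q, ENNReal.ofReal (P f q) * FF P' S ⊤ (sucskip q) := by
          refine Finset.sum_le_sum fun q _ => ?_
          rcases hpart q with hq | hq | hq
          · rw [hq, hnoι]; simp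
          · refine mul_le_mul_right ?_ _
            have h4 := ih q (Or.inr hq)
            rwa [(hskipF q hq).1]
          · refine mul_le_mul_right ?_ _
            calc FF P S (n : ℕ∞) q ≤ FF P S (n : ℕ∞) (sucskip q) := hleNF q hq _
              _ ≤ FF P' S ⊤ (sucskip q) := by
                have : FF P S (n : ℕ∞) (sucskip q) ≤ FF P' S ⊤ (sucskip q) :=
                  ih (sucskip q) (Or.inr ((hskipNF q hq).2.1))
                exact this
        refine h2.trans ?_
        rw [← hK (FF P' S ⊤) f hf, ← hrecP' f hfS]
  -- conclude
  have hι1 : FF P S ⊤ ι ≤ FF P' S ⊤ ι := by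
    rw [FF_top]
    exact iSup_le fun k => hb k ι (Or.inl rfl)
  have hι2 : FF P' S ⊤ ι ≤ FF P S ⊤ ι := by
    rw [FF_top]
    exact iSup_le fun k => ha k ι (Or.inl rfl)
  rw [reachProb_eq_toReal hPnn, reachProb_eq_toReal hP'nn,
    le_antisymm hι1 hι2]
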